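/- Equivariant BPIT implies equivariant CSP: let G be a topological group such that every nontrivial G-Boolean algebra admits a G-invariant prime ideal. Let V be a set with a G-action whose point stabilizers are open, let ι index G-invariant relations R_V i ⊆ V^(n i), and let D be a finite set with relations R_D i ⊆ D^(n i). If for every finite s ⊆ V there is a function f₀ : V → D preserving all constraints among tuples with coordinates in s, then there exists a G-equivariant homomorphism from (V, R_V) to (D, R_D). -/

import Mathlib

universe u v w x

namespace Stmt11Aux

variable {G : Type u} {V : Type v} {D : Type w} {ι : Type x}

section Defs

variable (n : ι → ℕ) (RV : ∀ i, (Fin (n i) → V) → Prop) (RD : ∀ i, (Fin (n i) → D) → Prop)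

/-- The set of homomorphisms `V → D`. -/
def Hom : Set (V → D) := {f | ∀ i x, RV i x → RD i (f ∘ x)}

/-- The Boolean algebra of finitely-determined subsets of `Hom`. -/
def BA : Type (max v w) :=
  {A : Set ↥(Hom n RV RD) // ∃ t : Finset V, ∀ f f' : ↥(Hom n RV RD),
    (∀ v ∈ t, (f : V → D) v = (f' : V → D) v) → (f ∈ A ↔ f' ∈ A)}

end Defs

namespace BA

variable {n : ι → ℕ} {RV : ∀ i, (Fin (n i) → V) → Prop} {RD : ∀ i, (Fin (n i) → D) → Prop}

instance : Max (BA n RV RD) :=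
  ⟨fun a b => ⟨a.1 ∪ b.1, by
    classical
    obtain ⟨t, ht⟩ := a.2; obtain ⟨s, hs⟩ := b.2
    refine ⟨t ∪ s, fun f f' h => ?_⟩
    simp only [Set.mem_union]
    rw [ht f f' (fun v hv => h v (Finset.mem_union_left _ hv)),
      hs f f' (fun v hv => h v (Finset.mem_union_right _ hv))]⟩⟩

instance : Min (BA n RV RD) :=
  ⟨fun a b => ⟨a.1 ∩ b.1, by
    classical
    obtain ⟨t, ht⟩ := a.2; obtain ⟨s, hs⟩ := b.2
    refine ⟨t ∪ s, fun f f' h => ?_⟩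
    simp only [Set.mem_inter_iff]
    rw [ht f f' (fun v hv => h v (Finset.mem_union_left _ hv)),
      hs f f' (fun v hv => h v (Finset.mem_union_right _ hv))]⟩⟩

instance : Top (BA n RV RD) := ⟨⟨Set.univ, ∅, fun _ _ _ => Iff.rfl⟩⟩

instance : Bot (BA n RV RD) := ⟨⟨∅, ∅, fun _ _ _ => Iff.rfl⟩⟩

instance : Compl (BA n RV RD) :=
  ⟨fun a => ⟨a.1ᶜ, by
    obtain ⟨t, ht⟩ := a.2
    exact ⟨t, fun f f' h => by simp only [Set.mem_compl_iff]; rw [ht f f' h]⟩⟩⟩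

instance : LE (BA n RV RD) := ⟨fun a b => a.1 ⊆ b.1⟩

instance : LT (BA n RV RD) := ⟨fun a b => a.1 ⊂ b.1⟩

instance : SDiff (BA n RV RD) := ⟨fun a b => a ⊓ bᶜ⟩

instance : HImp (BA n RV RD) := ⟨fun a b => aᶜ ⊔ b⟩

instance : BooleanAlgebra (BA n RV RD) :=
  Function.Injective.booleanAlgebra Subtype.val Subtype.val_injective
    Iff.rfl Iff.rfl (fun _ _ => rfl) (fun _ _ => rfl) rfl rfl (fun _ => rfl)
    (fun a b => by
      show a.1 ∩ b.1ᶜ = a.1 \ b.1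
      rw [Set.diff_eq])
    (fun a b => by
      show a.1ᶜ ∪ b.1 = a.1 ⇨ b.1
      rw [himp_eq]
      exact Set.union_comm _ _)

lemma le_iff {a b : BA n RV RD} : a ≤ b ↔ a.1 ⊆ b.1 := Iff.rfl

lemma inf_val (a b : BA n RV RD) : (a ⊓ b).1 = a.1 ∩ b.1 := rfl

lemma sup_val (a b : BA n RV RD) : (a ⊔ b).1 = a.1 ∪ b.1 := rfl

lemma top_val : (⊤ : BA n RV RD).1 = Set.univ := rfl

lemma bot_val : (⊥ : BA n RV RD).1 = ∅ := rfl

lemma compl_val (a : BA n RV RD) : (aᶜ).1 = a.1ᶜ := rfl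

/-- The basic element: homomorphisms sending `v` to `d`. -/
def basic (v : V) (d : D) : BA n RV RD :=
  ⟨{f | (f : V → D) v = d}, {v}, fun f f' h => by
    simp only [Set.mem_setOf_eq]
    rw [h v (Finset.mem_singleton_self v)]⟩

lemma mem_basic {v : V} {d : D} {f : ↥(Hom n RV RD)} :
    f ∈ (basic v d : BA n RV RD).1 ↔ (f : V → D) v = d := Iff.rfl

section Action

variable [Group G] [MulAction G V]
variable (hinv : ∀ i (x : Fin (n i) → V) (g : G), RV i x → RV i (fun k => g • x k))

/-- Action of `G` on homomorphisms. -/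
def hsmul (g : G) (f : ↥(Hom n RV RD)) : ↥(Hom n RV RD) :=
  ⟨fun v => (f : V → D) (g⁻¹ • v), fun i x hx => f.2 i (fun k => g⁻¹ • x k) (hinv i x g⁻¹ hx)⟩

lemma hsmul_apply (g : G) (f : ↥(Hom n RV RD)) (v : V) :
    ((hsmul hinv g f : ↥(Hom n RV RD)) : V → D) v = (f : V → D) (g⁻¹ • v) := rfl

/-- Action of `G` on the Boolean algebra. -/
def basmul (g : G) (a : BA n RV RD) : BA n RV RD :=
  ⟨{f | hsmul hinv g⁻¹ f ∈ a.1}, by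
    classical
    obtain ⟨t, ht⟩ := a.2
    refine ⟨t.image (fun v => g • v), fun f f' h => ?_⟩
    simp only [Set.mem_setOf_eq]
    refine ht _ _ (fun v hv => ?_)
    show (f : V → D) (g⁻¹⁻¹ • v) = (f' : V → D) (g⁻¹⁻¹ • v)
    rw [inv_inv]
    exact h (g • v) (Finset.mem_image_of_mem _ hv)⟩

lemma mem_basmul {g : G} {a : BA n RV RD} {f : ↥(Hom n RV RD)} :
    f ∈ (basmul hinv g a).1 ↔ hsmul hinv g⁻¹ f ∈ a.1 := Iff.rfl

lemma basmul_one (a : BA n RV RD) : basmul hinv 1 a = a := by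
  refine Subtype.ext (Set.ext fun f => ?_)
  rw [mem_basmul]
  have : hsmul hinv (1 : G)⁻¹ f = f := by
    refine Subtype.ext (funext fun v => ?_)
    rw [hsmul_apply, inv_one, inv_one, one_smul]
  rw [this]

lemma basmul_mul (g g' : G) (a : BA n RV RD) :
    basmul hinv (g * g') a = basmul hinv g (basmul hinv g' a) := by
  refine Subtype.ext (Set.ext fun f => ?_)
  rw [mem_basmul, mem_basmul, mem_basmul]
  have : hsmul hinv (g * g')⁻¹ f = hsmul hinv g'⁻¹ (hsmul hinv g⁻¹ f) := by
    refine Subtype.ext (funext fun v => ?_)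
    simp only [hsmul_apply, inv_inv, mul_smul]
  rw [this]

end Action

end BA

end Stmt11Aux

open Stmt11Aux Stmt11Aux.BA in
theorem stmt_11 {G : Type u} {V : Type v} {D : Type w} {ι : Type x}
    [Group G] [TopologicalSpace G] [IsTopologicalGroup G]
    (hbpit : ∀ (B : Type (max v w)) [BooleanAlgebra B] [MulAction G B],
      (∀ (g : G) (a b : B), g • (a ⊓ b) = g • a ⊓ g • b) →
      (∀ (g : G) (a : B), g • aᶜ = (g • a)ᶜ) →
      (∀ b : B, IsOpen {g : G | g • b = b}) →
      (⊥ : B) ≠ ⊤ →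
      ∃ I : Set B, (∀ a b : B, a ≤ b → b ∈ I → a ∈ I) ∧
        (∀ a b : B, a ∈ I → b ∈ I → a ⊔ b ∈ I) ∧ I ≠ Set.univ ∧
        (∀ b : B, b ∈ I ∨ bᶜ ∈ I) ∧ (∀ (g : G) (b : B), b ∈ I ↔ g • b ∈ I))
    [MulAction G V] [Finite D]
    (hstab : ∀ v : V, IsOpen {g : G | g • v = v})
    (n : ι → ℕ) (RV : ∀ i, (Fin (n i) → V) → Prop) (RD : ∀ i, (Fin (n i) → D) → Prop)
    (hinv : ∀ i (x : Fin (n i) → V) (g : G), RV i x → RV i (fun k => g • x k))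
    (hfin : ∀ s : Finset V, ∃ f₀ : V → D, ∀ i (x : Fin (n i) → V),
      (∀ k, x k ∈ s) → RV i x → RD i (f₀ ∘ x)) :
    ∃ h : V → D, (∀ i (x : Fin (n i) → V), RV i x → RD i (h ∘ x)) ∧
      ∀ (g : G) (v : V), h (g • v) = h v := by
  classical
  haveI := Fintype.ofFinite D
  -- Step 1 : `Hom` is nonempty, by compactness.
  have hne : (Hom n RV RD).Nonempty := by
    letI : TopologicalSpace D := ⊥
    haveI : DiscreteTopology D := ⟨rfl⟩
    by_contra hemp
    rw [Set.not_nonempty_iff_eq_empty] at hemp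
    have hcl : ∀ p : Σ i : ι, {x : Fin (n i) → V // RV i x},
        IsClosed {f : V → D | RD p.1 (f ∘ p.2.1)} := by
      intro p
      have hc : Continuous fun (f : V → D) => (f ∘ p.2.1 : Fin (n p.1) → D) :=
        continuous_pi fun k => continuous_apply _
      exact (isClosed_discrete {y : Fin (n p.1) → D | RD p.1 y}).preimage hc
    have hempty : (Set.univ : Set (V → D)) ∩
        ⋂ p : Σ i : ι, {x : Fin (n i) → V // RV i x}, {f | RD p.1 (f ∘ p.2.1)} = ∅ := by
      rw [Set.univ_inter]
      ext f
      simp only [Set.mem_iInter, Set.mem_empty_iff_false, iff_false, not_forall]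
      by_contra hcon
      push_neg at hcon
      have : f ∈ Hom n RV RD := fun i x hx => hcon ⟨i, x, hx⟩
      rw [hemp] at this
      exact this
    obtain ⟨u, hu⟩ := IsCompact.elim_finite_subfamily_closed isCompact_univ (fun p : Σ i : ι, {x : Fin (n i) → V // RV i x} => {f : V → D | RD p.1 (f ∘ p.2.1)}) hcl hempty
    set s : Finset V := u.biUnion fun p => Finset.image p.2.1 Finset.univ with hs
    obtain ⟨f₀, hf₀⟩ := hfin s
    have hmem : f₀ ∈ (Set.univ : Set (V → D)) ∩ ⋂ p ∈ u, {f | RD p.1 (f ∘ p.2.1)} := by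
      refine ⟨trivial, ?_⟩
      simp only [Set.mem_iInter]
      intro p hp
      exact hf₀ p.1 p.2.1
        (fun k => Finset.mem_biUnion.2 ⟨p, hp, Finset.mem_image_of_mem _ (Finset.mem_univ k)⟩)
        p.2.2
    rw [hu] at hmem
    exact hmem
  -- Step 2 : set up the `G`-action on `BA`.
  letI : MulAction G (BA n RV RD) :=
    { smul := basmul hinv
      one_smul := basmul_one hinv
      mul_smul := basmul_mul hinv }
  have smul_def : ∀ (g : G) (a : BA n RV RD), g • a = basmul hinv g a := fun _ _ => rfl
  -- Step 3 : apply the BPIT hypothesis.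
  obtain ⟨I, hdown, hjoin, hproper, hprime, hG⟩ :=
    hbpit (BA n RV RD)
      (fun g a b => Subtype.ext rfl)
      (fun g a => Subtype.ext rfl)
      (by
        intro b
        obtain ⟨t, ht⟩ := b.2
        have hUopen : IsOpen (⋂ v ∈ t, {g : G | g • v = v}) :=
          isOpen_biInter_finset fun v _ => hstab v
        have hsub : (⋂ v ∈ t, {g : G | g • v = v}) ⊆ {g : G | g • b = b} := by
          intro g hg
          simp only [Set.mem_iInter] at hg
          show g • b = b
          rw [smul_def]
          refine Subtype.ext (Set.ext fun f => ?_)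
          rw [mem_basmul]
          refine ht _ _ (fun v hv => ?_)
          rw [hsmul_apply, inv_inv, hg v hv]
        have hone : (1 : G) ∈ ⋂ v ∈ t, {g : G | g • v = v} := by
          simp only [Set.mem_iInter, Set.mem_setOf_eq]
          intro v _
          exact one_smul _ _
        have : {g : G | g • b = b} = ↑(MulAction.stabilizer G b) := rfl
        rw [this]
        exact Subgroup.isOpen_of_mem_nhds _
          (Filter.mem_of_superset (hUopen.mem_nhds hone) hsub))
      (by
        intro h
        obtain ⟨f₀, hf₀⟩ := hne
        have : (⟨f₀, hf₀⟩ : ↥(Hom n RV RD)) ∈ (⊥ : BA n RV RD).1 := by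
          rw [h]; exact Set.mem_univ _
        exact this)
  -- basic facts about the ideal
  have htopI : (⊤ : BA n RV RD) ∉ I := by
    intro h
    exact hproper (Set.eq_univ_of_forall fun b => hdown b ⊤ le_top h)
  have hbotI : (⊥ : BA n RV RD) ∈ I := by
    rcases hprime ⊥ with h | h
    · exact h
    · rw [compl_bot] at h
      exact absurd h htopI
  have hninf : ∀ a b : BA n RV RD, a ∉ I → b ∉ I → a ⊓ b ∉ I := by
    intro a b ha hb hab
    have hac : aᶜ ∈ I := (hprime a).resolve_left ha
    have hbc : bᶜ ∈ I := (hprime b).resolve_left hb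
    have h1 : (a ⊓ b)ᶜ ∈ I := by
      rw [compl_inf]
      exact hjoin _ _ hac hbc
    have h2 : (⊤ : BA n RV RD) ∈ I := by
      have := hjoin _ _ hab h1
      rwa [sup_compl_eq_top] at this
    exact htopI h2
  -- existence and uniqueness of values
  have hexists : ∀ v : V, ∃ d : D, (basic v d : BA n RV RD) ∉ I := by
    intro v
    by_contra hcon
    push_neg at hcon
    have hsup : ∀ s : Finset D, (s.sup fun d => (basic v d : BA n RV RD)) ∈ I := by
      intro s
      induction s using Finset.induction_on with
      | empty => simpa using hbotI
      | insert _ _ hx ih => rw [Finset.sup_insert]; exact hjoin _ _ (hcon _) ih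
    have htop : (Finset.univ.sup fun d => (basic v d : BA n RV RD)) = ⊤ := by
      refine le_antisymm le_top ?_
      rw [le_iff]
      intro f _
      have hmem : ∀ s : Finset D, ∀ f : ↥(Hom n RV RD),
          (∃ d ∈ s, f ∈ (basic v d : BA n RV RD).1) →
          f ∈ (s.sup fun d => (basic v d : BA n RV RD)).1 := by
        intro s
        induction s using Finset.induction_on with
        | empty => rintro f ⟨d, hd, _⟩; exact absurd hd (Finset.notMem_empty d)
        | @insert c s hx ih =>
          rintro f ⟨d, hd, hfd⟩
          rw [Finset.sup_insert, sup_val]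
          rcases Finset.mem_insert.1 hd with h | h
          · exact Or.inl (h ▸ hfd)
          · exact Or.inr (ih f ⟨d, h, hfd⟩)
      exact hmem Finset.univ f ⟨(f : V → D) v, Finset.mem_univ _, rfl⟩
    exact htopI (htop ▸ hsup Finset.univ)
  have huniq : ∀ (v : V) (d d' : D), (basic v d : BA n RV RD) ∉ I →
      (basic v d' : BA n RV RD) ∉ I → d = d' := by
    intro v d d' hd hd'
    by_contra hne'
    have hdisj : (basic v d : BA n RV RD) ⊓ basic v d' = ⊥ := by
      refine Subtype.ext (Set.ext fun f => ?_)
      rw [inf_val, bot_val]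
      simp only [Set.mem_inter_iff, Set.mem_empty_iff_false, iff_false]
      rintro ⟨h1, h2⟩
      rw [mem_basic] at h1 h2
      exact hne' (h1 ▸ h2 ▸ rfl)
    have := hninf _ _ hd hd'
    rw [hdisj] at this
    exact this hbotI
  -- the solution
  set h : V → D := fun v => Classical.choose (hexists v) with hh
  have hspec : ∀ v : V, (basic v (h v) : BA n RV RD) ∉ I :=
    fun v => Classical.choose_spec (hexists v)
  refine ⟨h, ?_, ?_⟩
  · -- homomorphism
    intro i x hx
    by_contra hcon
    have hinfI : (Finset.univ.inf fun k : Fin (n i) =>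
        (basic (x k) (h (x k)) : BA n RV RD)) ∉ I := by
      have key : ∀ s : Finset (Fin (n i)),
          (s.inf fun k => (basic (x k) (h (x k)) : BA n RV RD)) ∉ I := by
        intro s
        induction s using Finset.induction_on with
        | empty => simpa using htopI
        | insert _ _ hxx ih =>
          rw [Finset.inf_insert]
          exact hninf _ _ (hspec _) ih
      exact key Finset.univ
    have hbotinf : (Finset.univ.inf fun k : Fin (n i) =>
        (basic (x k) (h (x k)) : BA n RV RD)) = ⊥ := by
      refine Subtype.ext (Set.ext fun f => ?_)
      rw [bot_val]
      simp only [Set.mem_empty_iff_false, iff_false]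
      intro hf
      have hall : ∀ k : Fin (n i), (f : V → D) (x k) = h (x k) := by
        have hmem : ∀ s : Finset (Fin (n i)),
            f ∈ (s.inf fun k => (basic (x k) (h (x k)) : BA n RV RD)).1 →
            ∀ k ∈ s, (f : V → D) (x k) = h (x k) := by
          intro s
          induction s using Finset.induction_on with
          | empty => intro _ k hk; exact absurd hk (Finset.notMem_empty k)
          | @insert c s hxx ih =>
            intro hf' k hk
            rw [Finset.inf_insert, inf_val] at hf'
            rcases Finset.mem_insert.1 hk with h' | h'
            · subst h'; exact hf'.1
            · exact ih hf'.2 k h'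
        exact fun k => hmem Finset.univ hf k (Finset.mem_univ k)
      have := f.2 i x hx
      have heq : (f : V → D) ∘ x = h ∘ x := funext fun k => hall k
      rw [heq] at this
      exact hcon this
    rw [hbotinf] at hinfI
    exact hinfI hbotI
  · -- equivariance
    intro g v
    have hb : (basic (g • v) (h v) : BA n RV RD) = g • basic v (h v) := by
      rw [smul_def]
      refine Subtype.ext (Set.ext fun f => ?_)
      rw [mem_basmul, mem_basic, mem_basic, hsmul_apply, inv_inv]
    have hnI : (basic (g • v) (h v) : BA n RV RD) ∉ I := by
      rw [hb]
      intro hmem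
      exact hspec v ((hG g (basic v (h v))).2 hmem)
    exact huniq (g • v) _ _ (hspec (g • v)) hnI
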